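/- For all integers n and k with n ≥ k ≥ 4, the maximum number of edges in an outerplanar graph on n vertices that contains no path on k vertices and in which every connected component has at most k − 1 vertices equals 2n − 3⌈n/(k−1)⌉ + 1 if n ≡ 1 (mod k − 1), and equals 2n − 3⌈n/(k−1)⌉ otherwise. -/

import Mathlib

/-- A simple graph is outerplanar if it admits a one-page book embedding:
an injective integer labeling of the vertices such that no two edges interleave. -/
def IsOuterplanar {V : Type*} (G : SimpleGraph V) : Prop :=
  ∃ f : V → ℤ, Function.Injective f ∧
    ∀ a b c d : V, G.Adj a b → G.Adj c d →
      ¬(f a < f c ∧ f c < f b ∧ f b < f d)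

/-- `G` contains a subgraph isomorphic to `H`. -/
def ContainsCopy {W V : Type*} (H : SimpleGraph W) (G : SimpleGraph V) : Prop :=
  ∃ φ : H →g G, Function.Injective φ

/-- The outerplanar Turán number: maximum number of edges of an `H`-free
outerplanar graph on `n` vertices. -/
noncomputable def exOP (n : ℕ) {W : Type*} (H : SimpleGraph W) : ℕ :=
  sSup {m : ℕ | ∃ G : SimpleGraph (Fin n),
    IsOuterplanar G ∧ ¬ ContainsCopy H G ∧ m = G.edgeSet.ncard}

/-- The maximum number of edges of a connected `H`-free outerplanar graph on `n` vertices. -/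
noncomputable def exOP' (n : ℕ) {W : Type*} (H : SimpleGraph W) : ℕ :=
  sSup {m : ℕ | ∃ G : SimpleGraph (Fin n),
    IsOuterplanar G ∧ G.Connected ∧ ¬ ContainsCopy H G ∧ m = G.edgeSet.ncard}

/-- The maximum number of edges of an `H`-free outerplanar graph on `n` vertices
all of whose connected components have at most `k - 1` vertices. -/
noncomputable def exOP'' (n k : ℕ) {W : Type*} (H : SimpleGraph W) : ℕ :=
  sSup {m : ℕ | ∃ G : SimpleGraph (Fin n),
    IsOuterplanar G ∧ (∀ c : G.ConnectedComponent, c.supp.ncard ≤ k - 1) ∧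
    ¬ ContainsCopy H G ∧ m = G.edgeSet.ncard}



variable {V : Type*}

/-- ordered-pair representation of edges restricted to `S` -/
def Dset (G : SimpleGraph V) (f : V → ℤ) (S : Set V) : Set (V × V) :=
  {p : V × V | G.Adj p.1 p.2 ∧ f p.1 < f p.2 ∧ p.1 ∈ S ∧ p.2 ∈ S}

lemma edge_ncard_eq_D (G : SimpleGraph V) (f : V → ℤ) (hf : Function.Injective f) :
    G.edgeSet.ncard = (Dset G f Set.univ).ncard := by
  have himg : (Function.uncurry Sym2.mk) '' (Dset G f Set.univ) = G.edgeSet := by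
    ext e
    induction e with
    | _ a b =>
      simp only [Set.mem_image, SimpleGraph.mem_edgeSet, Dset, Set.mem_setOf_eq]
      constructor
      · rintro ⟨⟨x, y⟩, ⟨hadj, _, _, _⟩, hxy⟩
        replace hxy := (Sym2.mk_eq_mk_iff (p := (x, y)) (q := (a, b))).1 hxy
        rcases hxy with h | h <;> (cases h; first | exact hadj | exact hadj.symm)
      · intro hadj
        rcases lt_or_gt_of_ne (fun h => G.ne_of_adj hadj (hf h)) with h | h
        · exact ⟨(a, b), ⟨hadj, h, trivial, trivial⟩, rfl⟩
        · exact ⟨(b, a), ⟨hadj.symm, h, trivial, trivial⟩, Sym2.eq_swap⟩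
  have hinj : Set.InjOn (Function.uncurry Sym2.mk) (Dset G f Set.univ) := by
    rintro ⟨a, b⟩ ⟨ha, hab, -⟩ ⟨c, d⟩ ⟨hc, hcd, -⟩ h
    replace h := (Sym2.mk_eq_mk_iff (p := (a, b)) (q := (c, d))).1 h
    rcases h with h | h
    · exact h
    · simp only [Prod.swap_prod_mk, Prod.mk.injEq] at h
      obtain ⟨rfl, rfl⟩ := h
      exact absurd (hab.trans hcd) (lt_irrefl _)
  rw [← himg, Set.ncard_image_of_injOn hinj]



variable {V : Type*}

lemma D_bound [Fintype V] (G : SimpleGraph V) (f : V → ℤ) (hf : Function.Injective f)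
    (hcross : ∀ a b c d, G.Adj a b → G.Adj c d → ¬(f a < f c ∧ f c < f b ∧ f b < f d))
    (S : Set V) : (Dset G f S).ncard ≤ 2 * S.ncard - 3 := by
  classical
  rcases (Dset G f S).eq_empty_or_nonempty with hD | ⟨p₀, hp₀⟩
  · simp [hD]
  set D := Dset G f S with hDdef
  have hDsub : ∀ p ∈ D, G.Adj p.1 p.2 ∧ f p.1 < f p.2 ∧ p.1 ∈ S ∧ p.2 ∈ S := fun p hp => hp
  have hSfin : S.Finite := S.toFinite
  -- max and min of f on S
  obtain ⟨vmax, hvmaxS, hvmax⟩ := Set.exists_max_image S f hSfin ⟨p₀.1, hp₀.2.2.1⟩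
  obtain ⟨vmin, hvminS, hvmin⟩ := Set.exists_min_image S f hSfin ⟨p₀.1, hp₀.2.2.1⟩
  have hminmax : vmin ≠ vmax := by
    intro h
    have h1 : f vmin ≤ f p₀.1 := hvmin _ hp₀.2.2.1
    have h2 : f p₀.2 ≤ f vmax := hvmax _ hp₀.2.2.2
    have := hp₀.2.1
    rw [h] at h1; linarith
  have hS2 : 2 ≤ S.ncard := by
    rw [show (2:ℕ) = 1 + 1 by rfl]
    have : 1 < S.ncard := (Set.one_lt_ncard_iff hSfin).2 ⟨vmin, vmax, hvminS, hvmaxS, hminmax⟩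
    omega
  set shorts := {p ∈ D | ¬ ∃ w ∈ S, f p.1 < f w ∧ f w < f p.2} with hshorts
  set longs := {p ∈ D | ∃ w ∈ S, f p.1 < f w ∧ f w < f p.2} with hlongs
  have hunion : D = shorts ∪ longs := by
    ext p
    simp only [hshorts, hlongs, Set.mem_union, Set.mem_setOf_eq]
    tauto
  have hdisj : Disjoint shorts longs := by
    rw [Set.disjoint_left]; rintro p ⟨-, h⟩ ⟨-, h'⟩; exact h h'
  -- bound on shorts
  have hshorts_le : shorts.ncard ≤ S.ncard - 1 := by
    have h1 : shorts.ncard ≤ (S \ {vmax}).ncard := by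
      apply Set.ncard_le_ncard_of_injOn (fun p => p.1)
      · rintro p ⟨hpD, -⟩
        refine ⟨hpD.2.2.1, ?_⟩
        simp only [Set.mem_singleton_iff]
        intro h
        have h1 := hvmax _ hpD.2.2.2
        have h2 := hpD.2.1
        rw [h] at h2
        linarith
      · rintro p ⟨hpD, hps⟩ q ⟨hqD, hqs⟩ h
        simp only at h
        have h2 : p.2 = q.2 := by
          rcases lt_trichotomy (f p.2) (f q.2) with hlt | heq | hgt
          · exact absurd ⟨p.2, hpD.2.2.2, h ▸ hpD.2.1, hlt⟩ hqs
          · exact hf heq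
          · exact absurd ⟨q.2, hqD.2.2.2, h.symm ▸ hqD.2.1, hgt⟩ hps
        exact Prod.ext h h2
    rwa [Set.ncard_diff_singleton_of_mem hvmaxS] at h1
  -- the "uncovered point" sets for long edges
  set T : V × V → Set V := fun p =>
    {x | x ∈ S ∧ f p.1 < f x ∧ f x < f p.2 ∧
      ∀ p' ∈ D, p' ≠ p → ¬(f p.1 ≤ f p'.1 ∧ f p'.2 ≤ f p.2 ∧ f p'.1 < f x ∧ f x < f p'.2)}
    with hT
  have hTne : ∀ p ∈ longs, ∃ x, x ∈ T p ∧ ∀ y ∈ T p, f y ≤ f x := by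
    intro p hp
    suffices hne : (T p).Nonempty by
      obtain ⟨x, hx, hmax⟩ := Set.exists_max_image (T p) f (Set.toFinite _) hne
      exact ⟨x, hx, hmax⟩
    set P := {p' ∈ D | p' ≠ p ∧ f p.1 ≤ f p'.1 ∧ f p'.2 ≤ f p.2} with hP
    rcases P.eq_empty_or_nonempty with hPe | hPne
    · obtain ⟨w, hwS, hw1, hw2⟩ := hp.2
      refine ⟨w, hwS, hw1, hw2, ?_⟩
      intro p' hD' hne' hcl
      have : p' ∈ P := ⟨hD', hne', hcl.1, hcl.2.1⟩
      rw [hPe] at this; exact this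
    · obtain ⟨p₁, hp₁P, hmax1⟩ := Set.exists_max_image P (fun p' => f p'.2) (Set.toFinite _) hPne
      rcases lt_or_eq_of_le hp₁P.2.2.2 with hcase | hcase
      · -- x = p₁.2 works
        refine ⟨p₁.2, hp₁P.1.2.2.2, ?_, hcase, ?_⟩
        · exact lt_of_le_of_lt hp₁P.2.2.1 hp₁P.1.2.1
        · intro p' hD' hne' ⟨h1, h2, _, h4⟩
          have : p' ∈ P := ⟨hD', hne', h1, h2⟩
          have := hmax1 _ this
          linarith
      · -- p₁.2 shares the top endpoint with p; take minimal left endpoint among those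
        set P' := {p' ∈ P | f p'.2 = f p.2} with hP'
        have hp₁P' : p₁ ∈ P' := ⟨hp₁P, hcase⟩
        obtain ⟨p₂, hp₂P', hmin2⟩ := Set.exists_min_image P' (fun p' => f p'.1) (Set.toFinite _) ⟨p₁, hp₁P'⟩
        have hp₂D := hp₂P'.1.1
        have hp₂top : p₂.2 = p.2 := hf hp₂P'.2
        have hlt1 : f p.1 < f p₂.1 := by
          rcases lt_or_eq_of_le hp₂P'.1.2.2.1 with h | h
          · exact h
          · exfalso
            have h1 : p.1 = p₂.1 := hf h
            exact hp₂P'.1.2.1 (Prod.ext h1.symm hp₂top)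
        refine ⟨p₂.1, hp₂D.2.2.1, hlt1, lt_of_lt_of_le hp₂D.2.1 hp₂P'.1.2.2.2, ?_⟩
        intro p' hD' hne' ⟨h1, h2, h3, h4⟩
        rcases lt_or_eq_of_le h2 with hlt | heq
        · -- p' strictly below top: p' crosses p₂
          have hcr := hcross p'.1 p'.2 p₂.1 p₂.2 hD'.1 hp₂D.1
          apply hcr
          exact ⟨h3, h4, by rw [hp₂P'.2]; exact hlt⟩
        · -- p' also has top endpoint p.2: contradicts minimality of p₂
          have : p' ∈ P' := ⟨⟨hD', hne', h1, h2⟩, heq⟩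
          have := hmin2 _ this
          linarith
  have hVne : Nonempty V := ⟨p₀.1⟩
  have hch : ∀ p : V × V, ∃ x, p ∈ longs → (x ∈ T p ∧ ∀ y ∈ T p, f y ≤ f x) := by
    intro p
    by_cases h : p ∈ longs
    · exact (hTne p h).imp fun x hx _ => hx
    · exact ⟨Classical.arbitrary V, fun h' => absurd h' h⟩
  choose φ hφ using hch
  have hlongs_le : longs.ncard ≤ S.ncard - 2 := by
    have h1 : longs.ncard ≤ ((S \ {vmax}) \ {vmin}).ncard := by
      apply Set.ncard_le_ncard_of_injOn φ
      · intro p hp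
        obtain ⟨hxS, hx1, hx2, -⟩ := (hφ p hp).1
        have hminle : f vmin ≤ f p.1 := hvmin _ hp.1.2.2.1
        have hmaxge : f p.2 ≤ f vmax := hvmax _ hp.1.2.2.2
        refine ⟨⟨hxS, fun h => ?_⟩, fun h => ?_⟩
        · rw [Set.mem_singleton_iff] at h
          rw [h] at hx2
          linarith
        · rw [Set.mem_singleton_iff] at h
          rw [h] at hx1
          linarith
      · intro p hp q hq heq
        by_contra hne
        obtain ⟨hxSp, haxp, hxbp, hclp⟩ := (hφ p hp).1
        obtain ⟨hxSq, haxq, hxbq, hclq⟩ := (hφ q hq).1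
        rw [← heq] at haxq hxbq
        have hpD := hp.1; have hqD := hq.1
        have h1 : ¬(f p.1 ≤ f q.1 ∧ f q.2 ≤ f p.2) := by
          intro ⟨u1, u2⟩
          exact hclp q hqD (fun h => hne h.symm) ⟨u1, u2, haxq, hxbq⟩
        have h2 : ¬(f q.1 ≤ f p.1 ∧ f p.2 ≤ f q.2) := by
          intro ⟨u1, u2⟩
          exact hclq p hpD hne ⟨u1, u2, by rw [← heq]; exact haxp, by rw [← heq]; exact hxbp⟩
        have h3 := hcross p.1 p.2 q.1 q.2 hpD.1 hqD.1
        have h4 := hcross q.1 q.2 p.1 p.2 hqD.1 hpD.1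
        rcases le_or_gt (f q.1) (f p.1) with h | h
        · have hd : f q.2 < f p.2 := by
            by_contra h'
            exact h2 ⟨h, le_of_not_gt h'⟩
          have hca : ¬ f q.1 < f p.1 := fun hca => h4 ⟨hca, lt_trans haxp hxbq, hd⟩
          have hceq : f q.1 = f p.1 := le_antisymm h (not_lt.1 hca)
          exact h1 ⟨le_of_eq hceq.symm, le_of_lt hd⟩
        · have hd : f p.2 < f q.2 := by
            by_contra h'
            exact h1 ⟨le_of_lt h, le_of_not_gt h'⟩
          exact h3 ⟨h, lt_trans haxq hxbp, hd⟩
    have hvmin' : vmin ∈ S \ {vmax} := ⟨hvminS, by simpa using hminmax⟩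
    rw [Set.ncard_diff_singleton_of_mem hvmin',
        Set.ncard_diff_singleton_of_mem hvmaxS] at h1
    omega
  have := Set.ncard_union_eq hdisj (Set.toFinite _) (Set.toFinite _)
  rw [hunion, this]
  omega



lemma numeric_bound {C : Type*} [Fintype C] (msz : C → ℕ) (m q r : ℕ)
    (hm : 3 ≤ m) (hsz1 : ∀ c, 1 ≤ msz c) (hszm : ∀ c, msz c ≤ m)
    (hsum : ∑ c, msz c = m * q + r) :
    ((∑ c, (2 * msz c - 3) : ℕ) : ℤ) ≤
      2 * ((m : ℤ) * q + r) - 3 * q - (if r = 0 then 0 else 3) + (if r = 1 then 1 else 0) := by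
  classical
  set A := Finset.univ.filter (fun c => msz c = 1) with hA
  set B := Finset.univ.filter (fun c => ¬ msz c = 1) with hB
  set s := A.card with hs
  set d := B.card with hd
  have hsplit : ∀ g : C → ℕ, ∑ c, g c = ∑ c ∈ A, g c + ∑ c ∈ B, g c :=
    fun g => (Finset.sum_filter_add_sum_filter_not _ _ g).symm
  have hBge : ∀ c ∈ B, 2 ≤ msz c := by
    intro c hc
    have := hsz1 c
    have h2 := (Finset.mem_filter.1 hc).2
    omega
  have hsumA : ∑ c ∈ A, msz c = s := by
    rw [hs, Finset.card_eq_sum_ones]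
    exact Finset.sum_congr rfl (fun c hc => (Finset.mem_filter.1 hc).2)
  have hsumBle : ∑ c ∈ B, msz c ≤ d * m := by
    calc ∑ c ∈ B, msz c ≤ ∑ _c ∈ B, m := Finset.sum_le_sum (fun c _ => hszm c)
    _ = d * m := by rw [Finset.sum_const, smul_eq_mul]
  have hsumB : ∑ c ∈ B, msz c = m * q + r - s := by
    have := hsplit msz; omega
  have hsle : s ≤ m * q + r := by
    have h1 := hsplit msz; omega
  have hterm0 : ∀ c ∈ A, (2 * msz c - 3 : ℕ) = 0 := by
    intro c hc; rw [(Finset.mem_filter.1 hc).2]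
  have hcast : ((∑ c, (2 * msz c - 3) : ℕ) : ℤ) = 2 * ((m : ℤ) * q + r - s) - 3 * d := by
    rw [hsplit (fun c => 2 * msz c - 3)]
    rw [Finset.sum_congr rfl hterm0, Finset.sum_const, smul_eq_mul, mul_zero, zero_add]
    push_cast
    have hBt : ∀ c ∈ B, ((2 * msz c - 3 : ℕ) : ℤ) = 2 * (msz c : ℤ) - 3 := by
      intro c hc
      have := hBge c hc
      push_cast [Nat.cast_sub (by omega : 3 ≤ 2 * msz c)]
      ring
    rw [Finset.sum_congr rfl hBt, Finset.sum_sub_distrib, Finset.sum_const, ← Finset.mul_sum]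
    have hB' : ((∑ c ∈ B, msz c : ℕ) : ℤ) = (m : ℤ) * q + r - s := by
      rw [hsumB]
      push_cast [Nat.cast_sub hsle]
      ring
    push_cast at hB' ⊢
    rw [hB']
    ring
  rw [hcast]
  have hkey : m * q + r ≤ d * m + s := by
    have := hsumBle; omega
  have K : (m : ℤ) * q + r ≤ d * m + s := by exact_mod_cast hkey
  have hm' : (3 : ℤ) ≤ m := by exact_mod_cast hm
  have hs0 : (0 : ℤ) ≤ s := Nat.cast_nonneg _
  rcases eq_or_ne r 0 with h0 | h0
  · rw [if_pos h0, if_neg (by omega : r ≠ 1)]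
    have hr0 : (r : ℤ) = 0 := by exact_mod_cast h0
    rcases lt_trichotomy ((q : ℤ)) ((d : ℤ)) with h | h | h
    · linarith
    · linarith
    · have hmul : (3 : ℤ) * ((q : ℤ) - d) ≤ (m : ℤ) * ((q : ℤ) - d) :=
        mul_le_mul_of_nonneg_right hm' (by linarith)
      linarith
  · rcases eq_or_ne r 1 with h1 | h1
    · rw [if_neg h0, if_pos h1]
      have hr1 : (r : ℤ) = 1 := by exact_mod_cast h1
      rcases lt_trichotomy ((q : ℤ)) ((d : ℤ)) with h | h | h
      · linarith
      · rw [← h] at K; linarith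
      · have hmul : (3 : ℤ) * ((q : ℤ) - d) ≤ (m : ℤ) * ((q : ℤ) - d) :=
          mul_le_mul_of_nonneg_right hm' (by linarith)
        have h1' : (1 : ℤ) ≤ (q : ℤ) - d := by linarith
        linarith
    · rw [if_neg h0, if_neg h1]
      have hr2 : (2 : ℤ) ≤ r := by exact_mod_cast (by omega : 2 ≤ r)
      rcases lt_trichotomy ((q : ℤ)) ((d : ℤ)) with h | h | h
      · linarith
      · rw [← h] at K; linarith
      · have hmul : (3 : ℤ) * ((q : ℤ) - d) ≤ (m : ℤ) * ((q : ℤ) - d) :=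
          mul_le_mul_of_nonneg_right hm' (by linarith)
        have h1' : (1 : ℤ) ≤ (q : ℤ) - d := by linarith
        linarith


lemma upper_bound (n k : ℕ) (hk : 4 ≤ k) (G : SimpleGraph (Fin n))
    (hop : IsOuterplanar G) (hcomp : ∀ c : G.ConnectedComponent, c.supp.ncard ≤ k - 1) :
    (G.edgeSet.ncard : ℤ) ≤ 2 * (n : ℤ) - 3 * ((n / (k-1) : ℕ) : ℤ)
      - (if n % (k-1) = 0 then 0 else 3) + (if n % (k-1) = 1 then 1 else 0) := by
  classical
  obtain ⟨f, hf, hcross⟩ := hop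
  haveI : Fintype G.ConnectedComponent := Fintype.ofFinite _
  set m := k - 1 with hmdef
  have hm : 3 ≤ m := by omega
  set q := n / m with hqdef
  set r := n % m with hrdef
  have hqr : m * q + r = n := Nat.div_add_mod n m
  rw [edge_ncard_eq_D G f hf]
  set msz : G.ConnectedComponent → ℕ := fun c => c.supp.ncard with hmsz
  have hcount : (Dset G f Set.univ).ncard = ∑ c : G.ConnectedComponent, (Dset G f c.supp).ncard := by
    rw [Set.ncard_eq_toFinset_card _ (Set.toFinite _)]
    rw [Finset.card_eq_sum_card_fiberwise
      (f := fun p => G.connectedComponentMk p.1) (t := Finset.univ) (fun p _ => Finset.mem_univ _)]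
    apply Finset.sum_congr rfl
    intro c _
    rw [Set.ncard_eq_toFinset_card _ (Set.toFinite _)]
    congr 1
    ext p
    simp only [Finset.mem_filter, Set.Finite.mem_toFinset, Dset, Set.mem_setOf_eq, Set.mem_univ,
      and_true, SimpleGraph.ConnectedComponent.mem_supp_iff]
    constructor
    · rintro ⟨⟨hadj, hlt⟩, hc⟩
      refine ⟨hadj, hlt, hc, ?_⟩
      rw [← SimpleGraph.ConnectedComponent.connectedComponentMk_eq_of_adj hadj]
      exact hc
    · rintro ⟨hadj, hlt, h1, h2⟩
      exact ⟨⟨hadj, hlt⟩, h1⟩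
  have hsz1 : ∀ c, 1 ≤ msz c := by
    intro c
    obtain ⟨v, rfl⟩ := c.exists_rep
    have hv : v ∈ (G.connectedComponentMk v).supp := by
      rw [SimpleGraph.ConnectedComponent.mem_supp_iff]
    exact (Set.ncard_pos (Set.toFinite _)).2 ⟨v, hv⟩
  have hszm : ∀ c, msz c ≤ m := fun c => hcomp c
  have hsum : ∑ c, msz c = m * q + r := by
    have h2 : ∀ c : G.ConnectedComponent,
        msz c = (Finset.univ.filter (fun v => G.connectedComponentMk v = c)).card := by
      intro c
      show c.supp.ncard = _
      rw [Set.ncard_eq_toFinset_card _ (Set.toFinite _)]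
      congr 1
      ext v
      simp [SimpleGraph.ConnectedComponent.mem_supp_iff]
    have h1 : (Finset.univ : Finset (Fin n)).card
        = ∑ c : G.ConnectedComponent, (Finset.univ.filter (fun v => G.connectedComponentMk v = c)).card :=
      Finset.card_eq_sum_card_fiberwise (fun v _ => Finset.mem_univ _)
    rw [Finset.card_univ, Fintype.card_fin] at h1
    rw [Finset.sum_congr rfl (fun c _ => h2 c), ← h1, hqr]
  have hbound : ∀ c : G.ConnectedComponent, (Dset G f c.supp).ncard ≤ 2 * msz c - 3 :=
    fun c => D_bound G f hf hcross _
  have hfinal := numeric_bound msz m q r hm hsz1 hszm hsum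
  have hc2 : ((Dset G f Set.univ).ncard : ℤ) ≤ ((∑ c, (2 * msz c - 3) : ℕ) : ℤ) := by
    rw [hcount]
    exact_mod_cast Finset.sum_le_sum (fun c _ => hbound c)
  have hn' : ((m : ℤ) * q + r) = (n : ℤ) := by exact_mod_cast hqr
  rw [hn'] at hfinal
  exact le_trans hc2 hfinal


lemma count_filter_mod (mm : ℕ) (hm : 2 ≤ mm) (j : ℕ) (hj : j < mm) :
    ∀ n : ℕ, ((Finset.range n).filter (fun v => v % mm = j)).card
      = n / mm + if j < n % mm then 1 else 0 := by
  intro n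
  induction n with
  | zero => simp
  | succ n ih =>
    have hb : n % mm < mm := Nat.mod_lt _ (by omega)
    have hdm := Nat.div_add_mod n mm
    have hm0 : 0 < mm := by omega
    rw [Finset.range_add_one, Finset.filter_insert]
    rcases eq_or_ne (n % mm + 1) mm with hcase | hcase
    · have he : n + 1 = mm * (n / mm + 1) := by rw [Nat.mul_succ]; omega
      have h1 : (n + 1) % mm = 0 := by rw [he, Nat.mul_mod_right]
      have h2 : (n + 1) / mm = n / mm + 1 := by
        rw [he, Nat.mul_div_cancel_left _ hm0]
      rw [h1, h2]
      by_cases hnj : n % mm = j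
      · rw [if_pos hnj, Finset.card_insert_of_notMem (by simp), ih,
          if_neg (by omega : ¬ j < n % mm), if_neg (by omega : ¬ j < 0)]
      · rw [if_neg hnj, ih, if_pos (by omega : j < n % mm), if_neg (by omega : ¬ j < 0)]
    · have he : n + 1 = mm * (n / mm) + (n % mm + 1) := by omega
      have h1 : (n + 1) % mm = n % mm + 1 := by
        rw [he, Nat.mul_add_mod, Nat.mod_eq_of_lt (show n % mm + 1 < mm by omega)]
      have h2 : (n + 1) / mm = n / mm := by
        rw [he, Nat.mul_add_div hm0, Nat.div_eq_of_lt (show n % mm + 1 < mm by omega), add_zero]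
      rw [h1, h2]
      by_cases hnj : n % mm = j
      · rw [if_pos hnj, Finset.card_insert_of_notMem (by simp), ih,
          if_neg (by omega : ¬ j < n % mm), if_pos (by omega : j < n % mm + 1)]
      · rw [if_neg hnj, ih]
        congr 1
        by_cases hlt : j < n % mm
        · rw [if_pos hlt, if_pos (by omega)]
        · rw [if_neg hlt, if_neg (by omega)]


/-- the extremal construction: disjoint union of "fans" on consecutive blocks of `m` vertices -/
def blkG (n m : ℕ) : SimpleGraph (Fin n) where
  Adj u v := u.val / m = v.val / m ∧
    (u.val + 1 = v.val ∨ v.val + 1 = u.val ∨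
     (u.val + 2 ≤ v.val ∧ u.val % m = 0) ∨ (v.val + 2 ≤ u.val ∧ v.val % m = 0))
  symm := by
    constructor
    rintro u v ⟨h1, h2⟩
    exact ⟨h1.symm, by tauto⟩
  loopless := by
    constructor
    rintro u ⟨h1, h2⟩
    omega

lemma blk_outerplanar (n m : ℕ) (hm : 2 ≤ m) : IsOuterplanar (blkG n m) := by
  refine ⟨fun v => (v.val : ℤ), ?_, ?_⟩
  · intro u v h
    simp only at h
    exact Fin.ext (by exact_mod_cast h)
  · rintro a b c d hab hcd ⟨h1, h2, h3⟩
    simp only at h1 h2 h3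
    have hac : a.val < c.val := by exact_mod_cast h1
    have hcb : c.val < b.val := by exact_mod_cast h2
    have hbd : b.val < d.val := by exact_mod_cast h3
    obtain ⟨hblk, hdis⟩ := hab
    obtain ⟨hblk2, hdis2⟩ := hcd
    have hstart : a.val % m = 0 := by
      rcases hdis with h | h | ⟨h, h'⟩ | ⟨h, h'⟩
      · omega
      · omega
      · exact h'
      · omega
    have hcblk : c.val / m = a.val / m := by
      have h1' : a.val / m ≤ c.val / m := Nat.div_le_div_right (le_of_lt hac)
      have h2' : c.val / m ≤ b.val / m := Nat.div_le_div_right (le_of_lt hcb)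
      omega
    have hcstart : c.val % m ≠ 0 := by
      intro h0
      have da := Nat.div_add_mod a.val m
      have dc := Nat.div_add_mod c.val m
      rw [hstart, add_zero] at da
      rw [h0, add_zero] at dc
      have : c.val = a.val := by rw [← dc, hcblk, da]
      omega
    rcases hdis2 with h | h | ⟨h, h'⟩ | ⟨h, h'⟩
    · omega
    · omega
    · exact hcstart h'
    · omega

lemma blk_reach_block {n m : ℕ} {u v : Fin n} (h : (blkG n m).Reachable u v) :
    u.val / m = v.val / m := by
  obtain ⟨w⟩ := h
  induction w with
  | nil => rfl
  | cons h p ih => exact h.1.trans ih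

lemma blk_comp_card (n m : ℕ) (hm0 : 0 < m) (c : (blkG n m).ConnectedComponent) :
    c.supp.ncard ≤ m := by
  obtain ⟨v, rfl⟩ := c.exists_rep
  have hsub : ((blkG n m).connectedComponentMk v).supp
      ⊆ {u : Fin n | u.val / m = v.val / m} := by
    intro u hu
    rw [SimpleGraph.ConnectedComponent.mem_supp_iff, SimpleGraph.ConnectedComponent.eq] at hu
    exact blk_reach_block hu
  have hcard : ({u : Fin n | u.val / m = v.val / m} : Set (Fin n)).ncard ≤ m := by
    have hinj : Set.InjOn (fun u : Fin n => (⟨u.val % m, Nat.mod_lt _ hm0⟩ : Fin m))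
        {u : Fin n | u.val / m = v.val / m} := by
      intro u hu w hw he
      simp only [Set.mem_setOf_eq] at hu hw
      have hmods : u.val % m = w.val % m := by
        have := congrArg Fin.val he
        simpa using this
      have du := Nat.div_add_mod u.val m
      have dw := Nat.div_add_mod w.val m
      apply Fin.ext
      have : u.val = w.val := by
        conv_lhs => rw [← du]
        conv_rhs => rw [← dw]
        rw [show u.val / m = w.val / m from by rw [hu, hw], hmods]
      exact this
    have h2 := Set.ncard_le_ncard_of_injOn _ (fun u _ => Set.mem_univ _) hinj (Set.toFinite _)
    calc _ ≤ (Set.univ : Set (Fin m)).ncard := h2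
      _ = m := by rw [Set.ncard_univ, Nat.card_eq_fintype_card, Fintype.card_fin]
  exact le_trans (Set.ncard_le_ncard hsub (Set.toFinite _)) hcard

lemma pathfree (n k : ℕ) (hk : 4 ≤ k) (G : SimpleGraph (Fin n))
    (hcomp : ∀ c : G.ConnectedComponent, c.supp.ncard ≤ k - 1) :
    ¬ ContainsCopy (SimpleGraph.pathGraph k) G := by
  rintro ⟨φ, hφ⟩
  have hconn : (SimpleGraph.pathGraph k).Connected := by
    have := SimpleGraph.pathGraph_connected (k - 1)
    have hk0 : k - 1 + 1 = k := by omega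
    rwa [hk0] at this
  set v0 : Fin k := ⟨0, by omega⟩
  have hsub : Set.range φ ⊆ (G.connectedComponentMk (φ v0)).supp := by
    rintro _ ⟨i, rfl⟩
    rw [SimpleGraph.ConnectedComponent.mem_supp_iff, SimpleGraph.ConnectedComponent.eq]
    exact (hconn.preconnected i v0).map φ
  have hcard : (Set.range φ).ncard = k := by
    rw [← Set.image_univ, Set.ncard_image_of_injective _ hφ, Set.ncard_univ,
      Nat.card_eq_fintype_card, Fintype.card_fin]
  have hle := Set.ncard_le_ncard hsub (Set.toFinite _)
  have := hcomp (G.connectedComponentMk (φ v0))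
  omega


lemma card_fin_filter (n : ℕ) (p : ℕ → Prop) [DecidablePred p] :
    (Finset.univ.filter (fun v : Fin n => p v.val)).card = ((Finset.range n).filter p).card := by
  apply Finset.card_bij (fun v _ => v.val)
  · intro a ha
    simp only [Finset.mem_filter, Finset.mem_univ, true_and] at ha
    simp only [Finset.mem_filter, Finset.mem_range]
    exact ⟨a.isLt, ha⟩
  · intro a _ b _ h
    exact Fin.ext h
  · intro b hb
    simp only [Finset.mem_filter, Finset.mem_range] at hb
    exact ⟨⟨b, hb.1⟩, by simp [hb.2], rfl⟩

lemma blk_edge_count (n m : ℕ) (hm : 2 ≤ m) :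
    ((blkG n m).edgeSet.ncard : ℤ)
      = 2 * n - 3 * ((n / m : ℕ) : ℤ) - (if n % m = 0 then 0 else 3)
        + (if n % m = 1 then 1 else 0) := by
  classical
  have hf : Function.Injective (fun v : Fin n => (v.val : ℤ)) := by
    intro u v h
    simp only at h
    exact Fin.ext (by exact_mod_cast h)
  rw [edge_ncard_eq_D (blkG n m) _ hf]
  set D := Dset (blkG n m) (fun v : Fin n => (v.val : ℤ)) Set.univ with hD
  set D0 : Set (Fin n × Fin n) := {p | (blkG n m).Adj p.1 p.2 ∧ p.1.val + 1 = p.2.val} with hD0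
  set D1 : Set (Fin n × Fin n) := {p | (blkG n m).Adj p.1 p.2 ∧ p.1.val + 2 ≤ p.2.val} with hD1
  have hsplit : D = D0 ∪ D1 := by
    ext p
    simp only [hD, hD0, hD1, Dset, Set.mem_setOf_eq, Set.mem_union, Set.mem_univ, and_true]
    constructor
    · rintro ⟨hadj, hlt⟩
      have hlt' : p.1.val < p.2.val := by exact_mod_cast hlt
      by_cases h : p.1.val + 1 = p.2.val
      · exact Or.inl ⟨hadj, h⟩
      · exact Or.inr ⟨hadj, by omega⟩
    · rintro (⟨hadj, h⟩ | ⟨hadj, h⟩) <;>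
        exact ⟨hadj, by exact_mod_cast (show p.1.val < p.2.val by omega)⟩
  have hdisj : Disjoint D0 D1 := Set.disjoint_left.2 (by rintro p ⟨-, h⟩ ⟨-, h'⟩; omega)
  have hmc0 : 0 < m := by omega
  -- image of D0
  have himg0 : (fun p : Fin n × Fin n => p.2) '' D0 = {v : Fin n | 1 ≤ v.val % m} := by
    ext v
    simp only [Set.mem_image, hD0, Set.mem_setOf_eq]
    constructor
    · rintro ⟨p, ⟨hadj, hsucc⟩, rfl⟩
      obtain ⟨hblk, -⟩ := hadj
      by_contra h0
      have h0' : p.2.val % m = 0 := by omega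
      have dv := Nat.div_add_mod p.2.val m
      have hlt2 : p.1.val / m < p.2.val / m := by
        rw [Nat.div_lt_iff_lt_mul hmc0]
        have hmc : m * (p.2.val / m) = (p.2.val / m) * m := Nat.mul_comm _ _
        omega
      omega
    · rintro hv
      have hne : v.val ≠ 0 := by
        intro h
        rw [h, Nat.zero_mod] at hv
        omega
      refine ⟨(⟨v.val - 1, by omega⟩, v), ⟨⟨?_, ?_⟩, by show v.val - 1 + 1 = v.val; omega⟩, rfl⟩
      · show (v.val - 1) / m = v.val / m
        have dv := Nat.div_add_mod v.val m
        have hmlt := Nat.mod_lt v.val hmc0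
        have he : v.val - 1 = m * (v.val / m) + (v.val % m - 1) := by omega
        rw [he, Nat.mul_add_div hmc0, Nat.div_eq_of_lt (show v.val % m - 1 < m by omega),
          add_zero]
      · left
        show v.val - 1 + 1 = v.val
        omega
  have hinj0 : Set.InjOn (fun p : Fin n × Fin n => p.2) D0 := by
    rintro p ⟨-, hp⟩ q ⟨-, hq⟩ h
    simp only at h
    refine Prod.ext (Fin.ext ?_) h
    have := congrArg Fin.val h
    omega
  -- image of D1
  have himg1 : (fun p : Fin n × Fin n => p.2) '' D1 = {v : Fin n | 2 ≤ v.val % m} := by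
    ext v
    simp only [Set.mem_image, hD1, Set.mem_setOf_eq]
    constructor
    · rintro ⟨p, ⟨hadj, hgap⟩, rfl⟩
      obtain ⟨hblk, hdis⟩ := hadj
      have hstart : p.1.val % m = 0 := by omega
      have dv := Nat.div_add_mod p.2.val m
      have dp := Nat.div_add_mod p.1.val m
      have he : m * (p.1.val / m) = m * (p.2.val / m) := by rw [hblk]
      omega
    · rintro hv
      have dv := Nat.div_add_mod v.val m
      refine ⟨(⟨m * (v.val / m), by omega⟩, v), ⟨⟨?_, ?_⟩, by show m * (v.val / m) + 2 ≤ v.val; omega⟩, rfl⟩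
      · show (m * (v.val / m)) / m = v.val / m
        exact Nat.mul_div_cancel_left _ hmc0
      · right; right; left
        constructor
        · show m * (v.val / m) + 2 ≤ v.val
          omega
        · show (m * (v.val / m)) % m = 0
          exact Nat.mul_mod_right _ _
  have hinj1 : Set.InjOn (fun p : Fin n × Fin n => p.2) D1 := by
    rintro p ⟨hpadj, hp⟩ q ⟨hqadj, hq⟩ h
    simp only at h
    refine Prod.ext (Fin.ext ?_) h
    obtain ⟨hblkp, hdisp⟩ := hpadj
    obtain ⟨hblkq, hdisq⟩ := hqadj
    have hstartp : p.1.val % m = 0 := by omega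
    have hstartq : q.1.val % m = 0 := by omega
    have dp := Nat.div_add_mod p.1.val m
    have dq := Nat.div_add_mod q.1.val m
    have hv := congrArg Fin.val h
    have he : m * (p.1.val / m) = m * (q.1.val / m) := by
      rw [hblkp, hblkq, hv]
    omega
  -- counts of the residue sets
  have hcard0 : D0.ncard = (Finset.univ.filter (fun v : Fin n => 1 ≤ v.val % m)).card := by
    rw [← Set.ncard_image_of_injOn hinj0, himg0, Set.ncard_eq_toFinset_card',
      Set.toFinset_setOf]
  have hcard1 : D1.ncard = (Finset.univ.filter (fun v : Fin n => 2 ≤ v.val % m)).card := by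
    rw [← Set.ncard_image_of_injOn hinj1, himg1, Set.ncard_eq_toFinset_card',
      Set.toFinset_setOf]
  rw [hsplit, Set.ncard_union_eq hdisj (Set.toFinite _) (Set.toFinite _), hcard0, hcard1,
    card_fin_filter n (fun x => 1 ≤ x % m), card_fin_filter n (fun x => 2 ≤ x % m)]
  -- pure counting over range n
  have hc0 := count_filter_mod m hm 0 (by omega) n
  have hc1 := count_filter_mod m hm 1 (by omega) n
  have hpart1 : ((Finset.range n).filter (fun v => 1 ≤ v % m)).card
      + ((Finset.range n).filter (fun v => v % m = 0)).card = n := by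
    have h := Finset.card_filter_add_card_filter_not
      (s := Finset.range n) (p := fun v => 1 ≤ v % m)
    rw [Finset.card_range] at h
    have hneg : ((Finset.range n).filter (fun a => ¬ 1 ≤ a % m)).card
        = ((Finset.range n).filter (fun v => v % m = 0)).card := by
      congr 1
      apply Finset.filter_congr
      intro x _
      omega
    omega
  have hpart2 : ((Finset.range n).filter (fun v => 2 ≤ v % m)).card
      + (((Finset.range n).filter (fun v => v % m = 0)).card
        + ((Finset.range n).filter (fun v => v % m = 1)).card) = n := by
    have h := Finset.card_filter_add_card_filter_not
      (s := Finset.range n) (p := fun v => 2 ≤ v % m)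
    rw [Finset.card_range] at h
    have hsetEq : (Finset.range n).filter (fun a => ¬ 2 ≤ a % m)
        = (Finset.range n).filter (fun a => a % m = 0)
          ∪ (Finset.range n).filter (fun a => a % m = 1) := by
      rw [← Finset.filter_or]
      apply Finset.filter_congr
      intro x _
      omega
    have hdisj2 : Disjoint ((Finset.range n).filter (fun a => a % m = 0))
        ((Finset.range n).filter (fun a => a % m = 1)) := by
      rw [Finset.disjoint_filter]
      intro x _ hx
      omega
    have hcu := Finset.card_union_of_disjoint hdisj2
    rw [hsetEq, hcu] at h
    omega
  -- finish by case analysis on n % m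
  have hmod := Nat.mod_lt n hmc0
  rcases Nat.lt_or_ge (n % m) 1 with h1 | h1
  · have h0 : n % m = 0 := by omega
    rw [if_pos h0, if_neg (by omega)]
    rw [h0] at hc0 hc1
    rw [if_neg (by omega)] at hc0
    rw [if_neg (by omega)] at hc1
    push_cast
    omega
  · rcases Nat.lt_or_ge (n % m) 2 with h2 | h2
    · have h0 : n % m = 1 := by omega
      rw [if_neg (by omega), if_pos h0]
      rw [h0] at hc0 hc1
      rw [if_pos (by omega)] at hc0
      rw [if_neg (by omega)] at hc1
      push_cast
      omega
    · rw [if_neg (by omega), if_neg (by omega)]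
      rw [if_pos (by omega)] at hc0
      rw [if_pos (by omega)] at hc1
      push_cast
      omega


lemma ceil_eq_div (n mm : ℕ) (hm : 0 < mm) :
    ⌈(n : ℚ) / (mm : ℚ)⌉ = ((n / mm : ℕ) : ℤ) + if n % mm = 0 then 0 else 1 := by
  have hq := Nat.div_add_mod n mm
  have hmQ : (0 : ℚ) < (mm : ℚ) := by exact_mod_cast hm
  have hcast : (mm : ℚ) * ((n / mm : ℕ) : ℚ) + ((n % mm : ℕ) : ℚ) = (n : ℚ) := by
    exact_mod_cast hq
  have hrlt : ((n % mm : ℕ) : ℚ) < (mm : ℚ) := by exact_mod_cast Nat.mod_lt n hm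
  have hrnn : (0 : ℚ) ≤ ((n % mm : ℕ) : ℚ) := Nat.cast_nonneg _
  have hID : (((n : ℤ) / (mm : ℤ) : ℤ) : ℚ) = ((n / mm : ℕ) : ℚ) := by
    norm_cast
  rw [Int.ceil_eq_iff]
  constructor
  · -- lower bound
    rw [lt_div_iff₀ hmQ]
    push_cast
    rw [hID]
    split_ifs with h0
    · have : ((n % mm : ℕ) : ℚ) = 0 := by exact_mod_cast h0
      nlinarith
    · have h1 : (1 : ℚ) ≤ ((n % mm : ℕ) : ℚ) := by
        exact_mod_cast Nat.one_le_iff_ne_zero.2 h0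
      nlinarith
  · rw [div_le_iff₀ hmQ]
    push_cast
    rw [hID]
    split_ifs with h0
    · have : ((n % mm : ℕ) : ℚ) = 0 := by exact_mod_cast h0
      nlinarith
    · have h1 : (1 : ℚ) ≤ ((n % mm : ℕ) : ℚ) := by
        exact_mod_cast Nat.one_le_iff_ne_zero.2 h0
      nlinarith

theorem exOP''_path (n k : ℕ) (hk : 4 ≤ k) (hn : k ≤ n) :
    (exOP'' n k (SimpleGraph.pathGraph k) : ℤ) =
      if n % (k - 1) = 1 then 2 * (n : ℤ) - 3 * ⌈(n : ℚ) / ((k : ℚ) - 1)⌉ + 1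
      else 2 * (n : ℤ) - 3 * ⌈(n : ℚ) / ((k : ℚ) - 1)⌉ := by
  classical
  have hm2 : 2 ≤ k - 1 := by omega
  set Gc := blkG n (k - 1) with hGcdef
  have hcompGc : ∀ c : Gc.ConnectedComponent, c.supp.ncard ≤ k - 1 :=
    fun c => blk_comp_card n (k - 1) (by omega) c
  have hmem : Gc.edgeSet.ncard ∈ {m : ℕ | ∃ G : SimpleGraph (Fin n),
      IsOuterplanar G ∧ (∀ c : G.ConnectedComponent, c.supp.ncard ≤ k - 1) ∧
      ¬ ContainsCopy (SimpleGraph.pathGraph k) G ∧ m = G.edgeSet.ncard} :=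
    ⟨Gc, blk_outerplanar n (k - 1) hm2, hcompGc, pathfree n k hk Gc hcompGc, rfl⟩
  have hub : ∀ x ∈ {m : ℕ | ∃ G : SimpleGraph (Fin n),
      IsOuterplanar G ∧ (∀ c : G.ConnectedComponent, c.supp.ncard ≤ k - 1) ∧
      ¬ ContainsCopy (SimpleGraph.pathGraph k) G ∧ m = G.edgeSet.ncard},
      x ≤ Gc.edgeSet.ncard := by
    rintro x ⟨G, hop, hcomp, -, rfl⟩
    have h1 := upper_bound n k hk G hop hcomp
    have h2 := blk_edge_count n (k - 1) hm2
    rw [← h2] at h1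
    exact_mod_cast h1
  have hsup : exOP'' n k (SimpleGraph.pathGraph k) = Gc.edgeSet.ncard := by
    apply le_antisymm
    · exact csSup_le ⟨_, hmem⟩ hub
    · exact le_csSup ⟨_, hub⟩ hmem
  rw [hsup, blk_edge_count n (k - 1) hm2]
  have hceil : ⌈(n : ℚ) / ((k : ℚ) - 1)⌉
      = ((n / (k - 1) : ℕ) : ℤ) + if n % (k - 1) = 0 then 0 else 1 := by
    have hk1 : ((k : ℚ) - 1) = ((k - 1 : ℕ) : ℚ) := by
      rw [Nat.cast_sub (by omega : 1 ≤ k)]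
      norm_num
    rw [hk1, ceil_eq_div n (k - 1) (by omega)]
  rw [hceil]
  split_ifs <;> push_cast <;> omega
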